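/- Let H = H_J + H_μ + H_{h^z}. Define the diagonal operators P_0 e_{n,s} = [s_1=1] e_{n,s}; P_k e_{n,s} = ([n_k=1] + [s_{k+1}=1] − [s_k=1]) e_{n,s} for 1 ≤ k ≤ M−1; and P_M e_{n,s} = ([n_M=1] − [s_M=1]) e_{n,s}. Then every P_k (0 ≤ k ≤ M) commutes with H; i.e. the no-hopping breakdown model possesses M+1 local conserved charges P_0,…,P_M. -/

import Mathlib

open scoped BigOperators

namespace QuantumBreakdown

/-- Basis index: pairs of an occupation configuration and a spin configuration. -/
abbrev Cfg (M : ℕ) := (Fin M → Bool) × (Fin M → Bool)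

/-- The Hilbert space `V_M`. -/
abbrev V (M : ℕ) := Cfg M → ℂ

/-- The basis vector `e_{n,s}`. -/
noncomputable def e (M : ℕ) (p : Cfg M) : V M := Pi.single p 1

/-- The linear operator determined by prescribed images of the basis vectors. -/
noncomputable def mkOp (M : ℕ) (f : Cfg M → V M) : V M →ₗ[ℂ] V M :=
  (Pi.basisFun ℂ (Cfg M)).constr ℂ f

/-- The left site of edge `m`. -/
def sL (M : ℕ) (m : Fin (M - 1)) : Fin M := ⟨m.1, by have := m.2; omega⟩

/-- The right site of edge `m`. -/
def sR (M : ℕ) (m : Fin (M - 1)) : Fin M := ⟨m.1 + 1, by have := m.2; omega⟩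

/-- Move a fermion from site `a` to site `b`. -/
def hop (M : ℕ) (n : Fin M → Bool) (a b : Fin M) : Fin M → Bool :=
  Function.update (Function.update n a false) b true

/-- The hopping term `H_γ`. -/
noncomputable def Hgam (M : ℕ) (γ : Fin (M - 1) → ℝ) : V M →ₗ[ℂ] V M :=
  mkOp M fun p =>
    -∑ m : Fin (M - 1), (γ m : ℂ) •
      ((if p.1 (sL M m) = true ∧ p.1 (sR M m) = false then
          e M (hop M p.1 (sL M m) (sR M m), p.2) else 0)
        +
       (if p.1 (sR M m) = true ∧ p.1 (sL M m) = false then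
          e M (hop M p.1 (sR M m) (sL M m), p.2) else 0))

/-- The breakdown interaction `H_J`. -/
noncomputable def HJop (M : ℕ) (J : Fin (M - 1) → ℝ) : V M →ₗ[ℂ] V M :=
  mkOp M fun p =>
    ∑ m : Fin (M - 1), (J m : ℂ) •
      ((if p.1 (sL M m) = true ∧ p.1 (sR M m) = false ∧ p.2 (sR M m) = false then
          e M (hop M p.1 (sL M m) (sR M m), Function.update p.2 (sR M m) true) else 0)
        +
       (if p.1 (sR M m) = true ∧ p.1 (sL M m) = false ∧ p.2 (sR M m) = true then
          e M (hop M p.1 (sR M m) (sL M m), Function.update p.2 (sR M m) false) else 0))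

/-- The on-site potential `H_μ`. -/
noncomputable def Hmu (M : ℕ) (μ : Fin M → ℝ) : V M →ₗ[ℂ] V M :=
  mkOp M fun p => (∑ m : Fin M, if p.1 m = true then (μ m : ℂ) else 0) • e M p

/-- Pauli `σ^x` at site `m`. -/
noncomputable def sigx (M : ℕ) (m : Fin M) : V M →ₗ[ℂ] V M :=
  mkOp M fun p => e M (p.1, Function.update p.2 m (!p.2 m))

/-- Pauli `σ^y` at site `m`. -/
noncomputable def sigy (M : ℕ) (m : Fin M) : V M →ₗ[ℂ] V M :=
  mkOp M fun p =>
    (if p.2 m = true then Complex.I else -Complex.I) • e M (p.1, Function.update p.2 m (!p.2 m))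

/-- Pauli `σ^z` at site `m`. -/
noncomputable def sigz (M : ℕ) (m : Fin M) : V M →ₗ[ℂ] V M :=
  mkOp M fun p => (if p.2 m = true then (1 : ℂ) else -1) • e M p

/-- The magnetic field term `H_h`. -/
noncomputable def Hh (M : ℕ) (hx hy hz : Fin M → ℝ) : V M →ₗ[ℂ] V M :=
  ∑ m : Fin M, ((hx m : ℂ) • sigx M m + (hy m : ℂ) • sigy M m + (hz m : ℂ) • sigz M m)

/-- Number of occupied sites of an occupation configuration. -/
def nOcc (M : ℕ) (n : Fin M → Bool) : ℕ := (Finset.univ.filter fun m => n m = true).card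

/-- The number operator `N`. -/
noncomputable def numOp (M : ℕ) : V M →ₗ[ℂ] V M :=
  mkOp M fun p => (nOcc M p.1 : ℂ) • e M p

/-- The charge-`Q` sector `W_Q`. -/
noncomputable def sector (M Q : ℕ) : Submodule ℂ (V M) :=
  Submodule.span ℂ { v | ∃ p : Cfg M, nOcc M p.1 = Q ∧ v = e M p }

/-- The charge-`Q` sector with first spin up, `W_Q^↑`. -/
noncomputable def sectorUp (M : ℕ) (hM : 0 < M) (Q : ℕ) : Submodule ℂ (V M) :=
  Submodule.span ℂ { v | ∃ p : Cfg M, nOcc M p.1 = Q ∧ p.2 ⟨0, hM⟩ = true ∧ v = e M p }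

end QuantumBreakdown

open QuantumBreakdown

/-- `[b] = 1` if `b` holds, else `0`. -/
noncomputable def bC (b : Bool) : ℂ := if b then 1 else 0

/-- The value of a configuration at the 1-indexed site `j` (as `0/1 ∈ ℂ`),
with value `0` out of range. -/
noncomputable def site1 (M : ℕ) (f : Fin M → Bool) (j : ℕ) : ℂ :=
  if h : 1 ≤ j ∧ j ≤ M then bC (f ⟨j - 1, by omega⟩) else 0

/-- The local conserved charge `P_k` (`0 ≤ k ≤ M`):
`P_0 e_{n,s} = [s_1=1] e_{n,s}`,
`P_k e_{n,s} = ([n_k=1] + [s_{k+1}=1] − [s_k=1]) e_{n,s}` for `1 ≤ k ≤ M−1`, and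
`P_M e_{n,s} = ([n_M=1] − [s_M=1]) e_{n,s}`. -/
noncomputable def Pop (M : ℕ) (k : ℕ) : V M →ₗ[ℂ] V M :=
  mkOp M fun p =>
    (if k = 0 then site1 M p.2 1
     else if k = M then site1 M p.1 M - site1 M p.2 M
     else site1 M p.1 k + site1 M p.2 (k + 1) - site1 M p.2 k) • e M p

/-- The eigenvalue of `P_k` on `e_{n,s}`. -/
noncomputable def lam (M k : ℕ) (p : Cfg M) : ℂ :=
  if k = 0 then site1 M p.2 1
  else if k = M then site1 M p.1 M - site1 M p.2 M
  else site1 M p.1 k + site1 M p.2 (k + 1) - site1 M p.2 k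

lemma mkOp_e (M : ℕ) (f : Cfg M → V M) (p : Cfg M) : mkOp M f (e M p) = f p := by
  have : e M p = Pi.basisFun ℂ (Cfg M) p := by simp [e]
  rw [this, mkOp, Module.Basis.constr_basis]

lemma opExt {M : ℕ} {A B : V M →ₗ[ℂ] V M} (h : ∀ p, A (e M p) = B (e M p)) : A = B := by
  apply Module.Basis.ext (Pi.basisFun ℂ (Cfg M))
  intro p
  have hb : Pi.basisFun ℂ (Cfg M) p = e M p := by simp [e]
  rw [hb]; exact h p

lemma Pop_e (M k : ℕ) (p : Cfg M) : Pop M k (e M p) = lam M k p • e M p := by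
  rw [Pop, mkOp_e]; rfl

lemma site1_apply (M : ℕ) (f : Fin M → Bool) (i : Fin M) :
    site1 M f (i.1 + 1) = bC (f i) := by
  have h : 1 ≤ i.1 + 1 ∧ i.1 + 1 ≤ M := ⟨Nat.le_add_left _ _, i.2⟩
  rw [site1, dif_pos h]
  congr 1

lemma site1_update (M : ℕ) (f : Fin M → Bool) (i : Fin M) (b : Bool) (j : ℕ) :
    site1 M (Function.update f i b) j = if j = i.1 + 1 then bC b else site1 M f j := by
  by_cases hj : j = i.1 + 1
  · subst hj
    rw [if_pos rfl, site1_apply, Function.update_self]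
  · rw [if_neg hj]
    unfold site1
    split_ifs with h
    · congr 1
      apply Function.update_of_ne
      intro he
      exact hj (by have := congrArg Fin.val he; simp at this; omega)
    · rfl

lemma site1_hop (M : ℕ) (n : Fin M → Bool) (a b : Fin M) (j : ℕ) :
    site1 M (hop M n a b) j
      = if j = b.1 + 1 then 1 else if j = a.1 + 1 then 0 else site1 M n j := by
  rw [hop, site1_update, site1_update]
  simp [bC]

lemma lam_forward (M k : ℕ) (m : Fin (M - 1)) (p : Cfg M)
    (h1 : p.1 (sL M m) = true) (h2 : p.1 (sR M m) = false) (h3 : p.2 (sR M m) = false) :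
    lam M k (hop M p.1 (sL M m) (sR M m), Function.update p.2 (sR M m) true) = lam M k p := by
  have hm := m.2
  have e1 := site1_apply M p.1 (sL M m)
  have e2 := site1_apply M p.1 (sR M m)
  have e3 := site1_apply M p.2 (sR M m)
  rw [h1] at e1; rw [h2] at e2; rw [h3] at e3
  simp only [sL, sR] at e1 e2 e3
  simp [bC] at e1 e2 e3
  have hn : ∀ j, site1 M (hop M p.1 (sL M m) (sR M m)) j
      = if j = m.1 + 1 + 1 then 1 else if j = m.1 + 1 then 0 else site1 M p.1 j := by
    intro j; rw [site1_hop]; simp [sL, sR]; rfl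
  have hs : ∀ j, site1 M (Function.update p.2 (sR M m) true) j
      = if j = m.1 + 1 + 1 then 1 else site1 M p.2 j := by
    intro j; rw [site1_update]; simp [sR, bC]
  unfold lam
  split_ifs with hk0 hkM
  · rw [hs, if_neg (by omega)]
  · rw [hn, hs]
    by_cases hMm : M = m.1 + 1 + 1
    · have e2' : site1 M p.1 M = 0 := by rw [← hMm] at e2; exact e2
      have e3' : site1 M p.2 M = 0 := by rw [← hMm] at e3; exact e3
      rw [if_pos hMm, if_pos hMm, e2', e3']; ring
    · rw [if_neg hMm, if_neg hMm, if_neg (by omega)]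
  · rw [hn, hs, hs]
    by_cases hk1 : k = m.1 + 1
    · rw [if_neg (by omega), if_pos hk1, if_pos (by omega), if_neg (by omega), hk1, e1,
        show m.1 + 1 + 1 = m.1 + 1 + 1 from rfl]
      rw [show site1 M p.2 (m.1 + 1 + 1) = 0 from e3]
      ring
    · by_cases hk2 : k = m.1 + 1 + 1
      · rw [if_pos hk2, if_neg (by omega), if_pos hk2, hk2, e2, e3]; ring
      · rw [if_neg hk2, if_neg hk1, if_neg (by omega), if_neg hk2]

lemma lam_backward (M k : ℕ) (m : Fin (M - 1)) (p : Cfg M)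
    (h1 : p.1 (sR M m) = true) (h2 : p.1 (sL M m) = false) (h3 : p.2 (sR M m) = true) :
    lam M k (hop M p.1 (sR M m) (sL M m), Function.update p.2 (sR M m) false) = lam M k p := by
  have hm := m.2
  have e1 := site1_apply M p.1 (sL M m)
  have e2 := site1_apply M p.1 (sR M m)
  have e3 := site1_apply M p.2 (sR M m)
  rw [h1] at e2; rw [h2] at e1; rw [h3] at e3
  simp only [sL, sR] at e1 e2 e3
  simp [bC] at e1 e2 e3
  have hn : ∀ j, site1 M (hop M p.1 (sR M m) (sL M m)) j
      = if j = m.1 + 1 then 1 else if j = m.1 + 1 + 1 then 0 else site1 M p.1 j := by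
    intro j; rw [site1_hop]; simp [sL, sR]; rfl
  have hs : ∀ j, site1 M (Function.update p.2 (sR M m) false) j
      = if j = m.1 + 1 + 1 then 0 else site1 M p.2 j := by
    intro j; rw [site1_update]; simp [sR, bC]
  unfold lam
  split_ifs with hk0 hkM
  · rw [hs, if_neg (by omega)]
  · rw [hn, hs]
    by_cases hMm : M = m.1 + 1 + 1
    · have e2' : site1 M p.1 M = 1 := by rw [← hMm] at e2; exact e2
      have e3' : site1 M p.2 M = 1 := by rw [← hMm] at e3; exact e3
      rw [if_neg (by omega), if_pos hMm, if_pos hMm, e2', e3']; ring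
    · rw [if_neg (by omega), if_neg hMm, if_neg hMm]
  · rw [hn, hs, hs]
    by_cases hk1 : k = m.1 + 1
    · rw [if_pos hk1, if_pos (by omega), if_neg (by omega), hk1, e1,
        show site1 M p.2 (m.1 + 1 + 1) = 1 from e3]
      ring
    · by_cases hk2 : k = m.1 + 1 + 1
      · rw [if_neg hk1, if_pos hk2, if_neg (by omega), if_pos hk2, hk2, e2, e3]; ring
      · rw [if_neg hk1, if_neg hk2, if_neg (by omega), if_neg hk2]

/-- every `P_k` (`0 ≤ k ≤ M`) commutes with the no-hopping
breakdown Hamiltonian `H = H_J + H_μ + H_{h^z}`: the model possesses `M+1`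
local conserved charges `P_0, …, P_M`. -/
theorem local_charges_conserved (M : ℕ) (hM : 2 ≤ M)
    (J : Fin (M - 1) → ℝ) (μ : Fin M → ℝ) (hz : Fin M → ℝ) :
    ∀ k ≤ M,
      (HJop M J + Hmu M μ + ∑ m : Fin M, (hz m : ℂ) • sigz M m) ∘ₗ Pop M k
        = Pop M k ∘ₗ (HJop M J + Hmu M μ + ∑ m : Fin M, (hz m : ℂ) • sigz M m) := by
  intro k hk
  set Hop := HJop M J + Hmu M μ + ∑ m : Fin M, (hz m : ℂ) • sigz M m with hH
  have key : ∀ p : Cfg M, Pop M k (Hop (e M p)) = lam M k p • Hop (e M p) := by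
    intro p
    rw [hH]
    rw [LinearMap.add_apply, LinearMap.add_apply, map_add, map_add, smul_add, smul_add]
    congr 1
    congr 1
    · -- HJ part
      rw [HJop, mkOp_e, map_sum, Finset.smul_sum]
      refine Finset.sum_congr rfl fun m _ => ?_
      have H1 : Pop M k (if p.1 (sL M m) = true ∧ p.1 (sR M m) = false ∧ p.2 (sR M m) = false
            then e M (hop M p.1 (sL M m) (sR M m), Function.update p.2 (sR M m) true) else 0)
          = lam M k p • (if p.1 (sL M m) = true ∧ p.1 (sR M m) = false ∧ p.2 (sR M m) = false
            then e M (hop M p.1 (sL M m) (sR M m), Function.update p.2 (sR M m) true) else 0) := by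
        split_ifs with h
        · rw [Pop_e, lam_forward M k m p h.1 h.2.1 h.2.2]
        · simp
      have H2 : Pop M k (if p.1 (sR M m) = true ∧ p.1 (sL M m) = false ∧ p.2 (sR M m) = true
            then e M (hop M p.1 (sR M m) (sL M m), Function.update p.2 (sR M m) false) else 0)
          = lam M k p • (if p.1 (sR M m) = true ∧ p.1 (sL M m) = false ∧ p.2 (sR M m) = true
            then e M (hop M p.1 (sR M m) (sL M m), Function.update p.2 (sR M m) false) else 0) := by
        split_ifs with h
        · rw [Pop_e, lam_backward M k m p h.1 h.2.1 h.2.2]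
        · simp
      rw [map_smul, map_add, H1, H2, ← smul_add, smul_comm ((J m : ℂ)) (lam M k p)]
    · -- Hmu part
      rw [Hmu, mkOp_e, map_smul, Pop_e, smul_comm]
    · -- sigz part
      rw [LinearMap.sum_apply, map_sum, Finset.smul_sum]
      refine Finset.sum_congr rfl fun m _ => ?_
      rw [LinearMap.smul_apply, sigz, mkOp_e, map_smul, map_smul, Pop_e,
        smul_comm _ (lam M k p), smul_comm ((hz m : ℂ)) (lam M k p)]
  apply opExt
  intro p
  rw [LinearMap.comp_apply, LinearMap.comp_apply, Pop_e, map_smul, key p]
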